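/- Fix a maximum level 𝓛 ∈ ℕ and let m denote the 2D Morton index. Let (x, y, ℓ) and (x', y', ℓ') be quadrilateral elements with ℓ ≤ ℓ' ≤ 𝓛. Then (x', y', ℓ') is a descendant of (x, y, ℓ) if and only if m(x, y) ≤ m(x', y') < m(x, y) + 4^{𝓛−ℓ}. -/

import Mathlib

/-- The 2D Morton index: bitwise interleaving of the binary digits of `x` and
`y` (with `L` digits). -/
def morton (L x y : ℕ) : ℕ :=
  ∑ i ∈ Finset.range L, ((x / 2 ^ i % 2) + 2 * (y / 2 ^ i % 2)) * 4 ^ i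

/-- A quadrilateral element of level `l` in the 1:4 refinement of
`[0, 2^L]²` with maximum level `L`: anchor coordinates `(x, y)` divisible by
`2^(L - l)`. -/
def IsElement (L l x y : ℕ) : Prop :=
  l ≤ L ∧ x < 2 ^ L ∧ y < 2 ^ L ∧ 2 ^ (L - l) ∣ x ∧ 2 ^ (L - l) ∣ y

/-- The element `(x', y')` of level `l'` is a descendant of the element
`(x, y)` of level `l`. -/
def Descendant (L l x y l' x' y' : ℕ) : Prop :=
  l ≤ l' ∧ x ≤ x' ∧ x' < x + 2 ^ (L - l) ∧ y ≤ y' ∧ y' < y + 2 ^ (L - l)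

lemma morton_succ (L x y : ℕ) :
    morton (L+1) x y = x % 2 + 2 * (y % 2) + 4 * morton L (x/2) (y/2) := by
  unfold morton
  rw [Finset.sum_range_succ']
  simp only [pow_zero, Nat.div_one, mul_one]
  rw [Finset.mul_sum, add_comm]
  congr 1
  apply Finset.sum_congr rfl
  intro i _
  rw [Nat.div_div_eq_div_mul, Nat.div_div_eq_div_mul, ← pow_succ']
  ring

lemma morton_lt (L : ℕ) : ∀ x y, morton L x y < 4 ^ L := by
  induction L with
  | zero => intro x y; simp [morton]
  | succ L ih =>
    intro x y
    rw [morton_succ, pow_succ]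
    have := ih (x/2) (y/2)
    omega

lemma morton_inj (L : ℕ) : ∀ x y x' y', x < 2^L → y < 2^L → x' < 2^L → y' < 2^L →
    morton L x y = morton L x' y' → x = x' ∧ y = y' := by
  induction L with
  | zero => intro x y x' y' h1 h2 h3 h4 _; omega
  | succ L ih =>
    intro x y x' y' hx hy hx' hy' h
    rw [morton_succ, morton_succ] at h
    have key : x % 2 = x' % 2 ∧ y % 2 = y' % 2 ∧
        morton L (x/2) (y/2) = morton L (x'/2) (y'/2) := by omega
    have hp : 2 ^ (L+1) = 2 * 2 ^ L := by ring
    have := ih (x/2) (y/2) (x'/2) (y'/2) (by omega) (by omega) (by omega) (by omega) key.2.2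
    omega

lemma morton_split (L k x y : ℕ) (h : k ≤ L) :
    morton L x y = morton k x y + 4 ^ k * morton (L - k) (x / 2 ^ k) (y / 2 ^ k) := by
  obtain ⟨d, rfl⟩ : ∃ d, L = k + d := ⟨L - k, (Nat.add_sub_cancel' h).symm⟩
  unfold morton
  rw [Nat.add_sub_cancel_left, Finset.sum_range_add, Finset.mul_sum]
  congr 1
  apply Finset.sum_congr rfl
  intro i _
  rw [Nat.div_div_eq_div_mul, Nat.div_div_eq_div_mul, ← pow_add, pow_add 4 k i]
  ring

lemma morton_eq_zero (k x y : ℕ) (hx : 2^k ∣ x) (hy : 2^k ∣ y) : morton k x y = 0 := by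
  unfold morton
  apply Finset.sum_eq_zero
  intro i hi
  simp only [Finset.mem_range] at hi
  have d1 : x / 2 ^ i % 2 = 0 := by
    obtain ⟨c, rfl⟩ := (pow_dvd_pow 2 hi).trans hx
    rw [pow_succ, mul_assoc, Nat.mul_div_cancel_left _ (pow_pos (by norm_num : (0:ℕ) < 2) i)]
    omega
  have d2 : y / 2 ^ i % 2 = 0 := by
    obtain ⟨c, rfl⟩ := (pow_dvd_pow 2 hi).trans hy
    rw [pow_succ, mul_assoc, Nat.mul_div_cancel_left _ (pow_pos (by norm_num : (0:ℕ) < 2) i)]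
    omega
  simp [d1, d2]

/-- Prefix property of the Morton index: `(x', y', l')` is a descendant of
`(x, y, l)` iff its Morton index lies in `[m(x,y), m(x,y) + 4^(L-l))`. -/
theorem descendant_iff_morton_range (L l l' x y x' y' : ℕ)
    (hE : IsElement L l x y) (hE' : IsElement L l' x' y') (hll : l ≤ l') :
    Descendant L l x y l' x' y' ↔
      morton L x y ≤ morton L x' y' ∧
        morton L x' y' < morton L x y + 4 ^ (L - l) := by
  obtain ⟨hlL, hx, hy, hdx, hdy⟩ := hE
  obtain ⟨hlL', hx', hy', hdx', hdy'⟩ := hE'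
  set k := L - l with hk
  have hkL : k ≤ L := Nat.sub_le _ _
  have h2pos : (0:ℕ) < 2 ^ k := pow_pos (by norm_num : (0:ℕ) < 2) k
  have h4pos : (0:ℕ) < 4 ^ k := pow_pos (by norm_num : (0:ℕ) < 4) k
  have hpow : 2 ^ k * 2 ^ (L - k) = 2 ^ L := by
    rw [← pow_add, Nat.add_sub_cancel' hkL]
  have hsplit := morton_split L k x y hkL
  have hsplit' := morton_split L k x' y' hkL
  have hzero : morton k x y = 0 := morton_eq_zero k x y hdx hdy
  have hr : morton k x' y' < 4 ^ k := morton_lt k x' y'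
  have hxe : 2 ^ k * (x / 2 ^ k) = x := Nat.mul_div_cancel' hdx
  have hye : 2 ^ k * (y / 2 ^ k) = y := Nat.mul_div_cancel' hdy
  have hbx : x / 2 ^ k < 2 ^ (L - k) := by
    rw [Nat.div_lt_iff_lt_mul h2pos, mul_comm, hpow]; exact hx
  have hby : y / 2 ^ k < 2 ^ (L - k) := by
    rw [Nat.div_lt_iff_lt_mul h2pos, mul_comm, hpow]; exact hy
  have hbx' : x' / 2 ^ k < 2 ^ (L - k) := by
    rw [Nat.div_lt_iff_lt_mul h2pos, mul_comm, hpow]; exact hx'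
  have hby' : y' / 2 ^ k < 2 ^ (L - k) := by
    rw [Nat.div_lt_iff_lt_mul h2pos, mul_comm, hpow]; exact hy'
  constructor
  · rintro ⟨-, h1, h2, h3, h4⟩
    have ex : x' / 2 ^ k = x / 2 ^ k := by
      have hle : x / 2 ^ k ≤ x' / 2 ^ k := Nat.div_le_div_right h1
      have hlt : x' / 2 ^ k < x / 2 ^ k + 1 := by
        rw [Nat.div_lt_iff_lt_mul h2pos, add_mul, one_mul, mul_comm, hxe]
        exact h2
      omega
    have ey : y' / 2 ^ k = y / 2 ^ k := by
      have hle : y / 2 ^ k ≤ y' / 2 ^ k := Nat.div_le_div_right h3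
      have hlt : y' / 2 ^ k < y / 2 ^ k + 1 := by
        rw [Nat.div_lt_iff_lt_mul h2pos, add_mul, one_mul, mul_comm, hye]
        exact h4
      omega
    rw [hsplit, hsplit', hzero, ex, ey]
    set A := 4 ^ k * morton (L - k) (x / 2 ^ k) (y / 2 ^ k) with hA
    omega
  · rintro ⟨h1, h2⟩
    rw [hsplit, hsplit', hzero] at h1 h2
    set M := morton (L - k) (x / 2 ^ k) (y / 2 ^ k) with hM
    set M' := morton (L - k) (x' / 2 ^ k) (y' / 2 ^ k) with hM'
    have hMM : M = M' := by
      have e1 : M' ≤ M := by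
        have : 4 ^ k * M' < 4 ^ k * (M + 1) := by
          calc 4 ^ k * M' ≤ morton k x' y' + 4 ^ k * M' := by omega
            _ < 0 + 4 ^ k * M + 4 ^ k := h2
            _ = 4 ^ k * (M + 1) := by ring
        have := Nat.lt_of_mul_lt_mul_left this
        omega
      have e2 : M ≤ M' := by
        have : 4 ^ k * M < 4 ^ k * (M' + 1) := by
          calc 4 ^ k * M ≤ morton k x' y' + 4 ^ k * M' := by omega
            _ < 4 ^ k * (M' + 1) := by rw [mul_add, mul_one]; omega
        have := Nat.lt_of_mul_lt_mul_left this
        omega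
      omega
    obtain ⟨ex, ey⟩ := morton_inj (L - k) _ _ _ _ hbx hby hbx' hby' hMM
    refine ⟨hll, ?_, ?_, ?_, ?_⟩
    · calc x = 2 ^ k * (x' / 2 ^ k) := by rw [← ex, hxe]
        _ ≤ x' := Nat.mul_div_le x' (2 ^ k)
    · have := Nat.div_add_mod x' (2 ^ k)
      have hm : x' % 2 ^ k < 2 ^ k := Nat.mod_lt _ h2pos
      calc x' = 2 ^ k * (x' / 2 ^ k) + x' % 2 ^ k := (Nat.div_add_mod x' (2 ^ k)).symm
        _ = x + x' % 2 ^ k := by rw [← ex, hxe]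
        _ < x + 2 ^ k := by omega
    · calc y = 2 ^ k * (y' / 2 ^ k) := by rw [← ey, hye]
        _ ≤ y' := Nat.mul_div_le y' (2 ^ k)
    · have hm : y' % 2 ^ k < 2 ^ k := Nat.mod_lt _ h2pos
      calc y' = 2 ^ k * (y' / 2 ^ k) + y' % 2 ^ k := (Nat.div_add_mod y' (2 ^ k)).symm
        _ = y + y' % 2 ^ k := by rw [← ey, hye]
        _ < y + 2 ^ k := by omega
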